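/- Let G be a connected simple graph on n ≥ 2 vertices with diameter d and Wiener index W(G). Then DLS(G) ≥ (2n + d² − 2d + 1)/2 − 2W(G)/(n−1). -/

import Mathlib

open Finset Matrix Polynomial

/-- The transmission `Tr(v)` of a vertex `v`: the sum of the distances from `v`
to all other vertices of the graph. -/
noncomputable def transm {n : ℕ} (G : SimpleGraph (Fin n)) (v : Fin n) : ℝ :=
  ∑ u : Fin n, (G.dist v u : ℝ)

/-- The distance Laplacian matrix `D^L(G) = Diag(Tr) - D(G)` of a graph `G`. -/
noncomputable def distLap {n : ℕ} (G : SimpleGraph (Fin n)) : Matrix (Fin n) (Fin n) ℝ :=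
  Matrix.diagonal (transm G) - Matrix.of (fun u v : Fin n => (G.dist u v : ℝ))

/-- `IsDLSpec G μ` says that `μ 0 , μ 1 , …, μ (n-1)` are exactly the eigenvalues
(with multiplicity) of the distance Laplacian matrix of `G`; combined with `Antitone μ`
this means `μ ⟨i-1,_⟩ = ∂_i^L(G)` in the usual decreasing ordering. -/
def IsDLSpec {n : ℕ} (G : SimpleGraph (Fin n)) (μ : Fin n → ℝ) : Prop :=
  (distLap G).charpoly = ∏ i : Fin n, (X - C (μ i))

/-- The Wiener index `W(G) = (1/2) ∑_v Tr(v)`. -/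
noncomputable def wiener {n : ℕ} (G : SimpleGraph (Fin n)) : ℝ :=
  (∑ v : Fin n, transm G v) / 2

/-- The maximum transmission `Tr_max(G) = max_v Tr(v)`. -/
noncomputable def trMax {n : ℕ} (G : SimpleGraph (Fin n)) : ℝ :=
  ⨆ v : Fin n, transm G v

/-! ### Auxiliary lemmas -/

section WalkAux

variable {V : Type*} {G : SimpleGraph V}

lemma aux_length_drop {u v : V} (p : G.Walk u v) (k : ℕ) :
    (p.drop k).length = p.length - k := by
  induction p generalizing k with
  | nil => cases k <;> simp [SimpleGraph.Walk.drop]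
  | cons h q ih =>
    cases k with
    | zero => simp [SimpleGraph.Walk.drop]
    | succ m =>
      simp only [SimpleGraph.Walk.drop, SimpleGraph.Walk.length_copy,
        SimpleGraph.Walk.length_cons, ih]
      rw [Nat.add_sub_add_right]
      exact ih m

lemma aux_dist_getVert_le (hG : G.Connected) {u v : V} (p : G.Walk u v) (k : ℕ) :
    G.dist u (p.getVert k) ≤ k := by
  induction p generalizing k with
  | nil => simp [SimpleGraph.Walk.getVert, SimpleGraph.dist_self]
  | cons h q ih =>
    rename_i a b c
    cases k with
    | zero => simp
    | succ m =>
      have h1 : G.dist a (q.getVert m) ≤ G.dist a b + G.dist b (q.getVert m) :=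
        hG.dist_triangle
      have h2 : G.dist a b = 1 := SimpleGraph.dist_eq_one_iff_adj.mpr h
      have h3 := ih m
      simpa [SimpleGraph.Walk.getVert_cons_succ] using by omega
  
lemma aux_dist_getVert (hG : G.Connected) {u v : V} (p : G.Walk u v)
    (hp : p.length = G.dist u v) {k : ℕ} (hk : k ≤ p.length) :
    G.dist u (p.getVert k) = k := by
  have h1 : G.dist u (p.getVert k) ≤ k := aux_dist_getVert_le hG p k
  have h2 : G.dist (p.getVert k) v ≤ p.length - k := by
    have := SimpleGraph.dist_le (p.drop k)
    rwa [aux_length_drop] at this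
  have h3 : G.dist u v ≤ G.dist u (p.getVert k) + G.dist (p.getVert k) v :=
    hG.dist_triangle
  omega

end WalkAux

/-- Natural-number transmission bound for an endpoint of a diametral pair. -/
lemma aux_transm_nat {n : ℕ} {G : SimpleGraph (Fin n)} (hG : G.Connected)
    {v w : Fin n} (hd : G.dist v w = G.diam) :
    G.diam + 1 ≤ n ∧
      G.diam * (G.diam + 1) + 2 * (n - G.diam - 1) ≤ 2 * ∑ u : Fin n, G.dist v u := by
  classical
  obtain ⟨p, hp⟩ := hG.exists_walk_length_eq_dist v w
  rw [hd] at hp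
  set d := G.diam with hdd
  have hdist : ∀ k ∈ Finset.range (d + 1), G.dist v (p.getVert k) = k := by
    intro k hk
    rw [Finset.mem_range] at hk
    exact aux_dist_getVert hG p (by rw [hp, hd]) (by omega)
  set S : Finset (Fin n) := (Finset.range (d + 1)).image p.getVert with hS
  have hinj : ∀ a ∈ Finset.range (d+1), ∀ b ∈ Finset.range (d+1),
      p.getVert a = p.getVert b → a = b := by
    intro a ha b hb hab
    have := hdist a ha
    rw [hab, hdist b hb] at this
    omega
  have hcard : S.card = d + 1 := by
    rw [hS, Finset.card_image_of_injOn hinj, Finset.card_range]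
  have hle : d + 1 ≤ n := by
    calc d + 1 = S.card := hcard.symm
    _ ≤ (Finset.univ : Finset (Fin n)).card := Finset.card_le_card (Finset.subset_univ S)
    _ = n := by simp
  refine ⟨hle, ?_⟩
  have hsplit : ∑ u ∈ Finset.univ \ S, G.dist v u + ∑ u ∈ S, G.dist v u
      = ∑ u : Fin n, G.dist v u :=
    Finset.sum_sdiff (Finset.subset_univ S)
  have hS_sum : 2 * ∑ u ∈ S, G.dist v u = d * (d + 1) := by
    rw [hS, Finset.sum_image hinj]
    have : ∑ k ∈ Finset.range (d+1), G.dist v (p.getVert k)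
        = ∑ k ∈ Finset.range (d+1), k := Finset.sum_congr rfl hdist
    rw [this, Nat.mul_comm d (d+1)]
    have hg := Finset.sum_range_id_mul_two (d+1)
    simp only [Nat.add_sub_cancel] at hg
    omega
  have hvS : v ∈ S := by
    rw [hS]
    refine Finset.mem_image.mpr ⟨0, by simp, ?_⟩
    simp [SimpleGraph.Walk.getVert_zero]
  have hcompl : n - d - 1 ≤ ∑ u ∈ Finset.univ \ S, G.dist v u := by
    have hcard' : (Finset.univ \ S).card = n - (d + 1) := by
      rw [Finset.card_sdiff_of_subset (Finset.subset_univ S), hcard]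
      simp
    have : ∀ u ∈ Finset.univ \ S, 1 ≤ G.dist v u := by
      intro u hu
      rw [Finset.mem_sdiff] at hu
      have hne : v ≠ u := by
        rintro rfl
        exact hu.2 hvS
      exact hG.pos_dist_of_ne hne
    calc n - d - 1 = (Finset.univ \ S).card := by omega
    _ = ∑ _u ∈ Finset.univ \ S, 1 := by simp
    _ ≤ ∑ u ∈ Finset.univ \ S, G.dist v u := Finset.sum_le_sum this
  have hS_sum' : d * (d + 1) = 2 * ∑ u ∈ S, G.dist v u := by rw [hS_sum]
  omega

lemma distLap_isHermitian {n : ℕ} (G : SimpleGraph (Fin n)) : (distLap G).IsHermitian := by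
  unfold Matrix.IsHermitian
  ext i j
  simp only [Matrix.conjTranspose_apply, distLap, Matrix.sub_apply, Matrix.of_apply, star_trivial]
  rw [SimpleGraph.dist_comm]
  congr 1
  by_cases h : i = j
  · subst h; rfl
  · rw [Matrix.diagonal_apply_ne _ h, Matrix.diagonal_apply_ne' _ h]

lemma distLap_mulVec {n : ℕ} (G : SimpleGraph (Fin n)) (x : Fin n → ℝ) (u : Fin n) :
    (distLap G *ᵥ x) u = transm G u * x u - ∑ w : Fin n, (G.dist u w : ℝ) * x w := by
  have h : distLap G *ᵥ x = (Matrix.diagonal (transm G) *ᵥ x)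
      - (Matrix.of (fun u v : Fin n => (G.dist u v : ℝ)) *ᵥ x) := by
    rw [distLap, Matrix.sub_mulVec]
  rw [h, Pi.sub_apply, Matrix.mulVec_diagonal]
  rfl

lemma distLap_quad {n : ℕ} (G : SimpleGraph (Fin n)) (x : Fin n → ℝ) :
    x ⬝ᵥ (distLap G *ᵥ x) =
      (∑ u : Fin n, ∑ w : Fin n, (G.dist u w : ℝ) * (x u - x w) ^ 2) / 2 := by
  have hsym : ∀ u w : Fin n, (G.dist u w : ℝ) = (G.dist w u : ℝ) := by
    intro u w; rw [SimpleGraph.dist_comm]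
  have hswap : ∑ u : Fin n, ∑ w : Fin n, (G.dist u w : ℝ) * (x w) ^ 2
      = ∑ u : Fin n, ∑ w : Fin n, (G.dist u w : ℝ) * (x u) ^ 2 := by
    rw [Finset.sum_comm]
    exact Finset.sum_congr rfl fun w _ => Finset.sum_congr rfl fun u _ => by rw [hsym]
  have h1 : x ⬝ᵥ (distLap G *ᵥ x)
      = (∑ u : Fin n, ∑ w : Fin n, (G.dist u w : ℝ) * x u ^ 2)
        - ∑ u : Fin n, ∑ w : Fin n, (G.dist u w : ℝ) * (x u * x w) := by
    simp only [dotProduct, distLap_mulVec, transm]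
    rw [← Finset.sum_sub_distrib]
    refine Finset.sum_congr rfl fun u _ => ?_
    rw [← Finset.sum_sub_distrib, mul_sub, Finset.sum_mul, Finset.mul_sum, Finset.mul_sum,
      ← Finset.sum_sub_distrib]
    refine Finset.sum_congr rfl fun w _ => ?_
    ring
  have h2 : ∑ u : Fin n, ∑ w : Fin n, (G.dist u w : ℝ) * (x u - x w) ^ 2
      = (∑ u : Fin n, ∑ w : Fin n, (G.dist u w : ℝ) * x u ^ 2)
        - 2 * (∑ u : Fin n, ∑ w : Fin n, (G.dist u w : ℝ) * (x u * x w))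
        + ∑ u : Fin n, ∑ w : Fin n, (G.dist u w : ℝ) * x w ^ 2 := by
    rw [Finset.mul_sum, ← Finset.sum_sub_distrib, ← Finset.sum_add_distrib]
    refine Finset.sum_congr rfl fun u _ => ?_
    rw [Finset.mul_sum, ← Finset.sum_sub_distrib, ← Finset.sum_add_distrib]
    refine Finset.sum_congr rfl fun w _ => ?_
    ring
  rw [h1, h2, hswap]
  ring

lemma distLap_posSemidef {n : ℕ} (G : SimpleGraph (Fin n)) : (distLap G).PosSemidef := by
  refine Matrix.posSemidef_iff_dotProduct_mulVec.mpr ⟨distLap_isHermitian G, fun x => ?_⟩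
  have : star x = x := by funext i; simp
  rw [this, distLap_quad]
  apply div_nonneg _ (by norm_num)
  apply Finset.sum_nonneg
  intro u _
  apply Finset.sum_nonneg
  intro w _
  positivity

lemma aux_charpoly_hermitian {n : ℕ} {A : Matrix (Fin n) (Fin n) ℝ} (hA : A.IsHermitian) :
    A.charpoly = ∏ i : Fin n, (X - C (hA.eigenvalues i)) := by
  classical
  have hU1 : (hA.eigenvectorUnitary : Matrix (Fin n) (Fin n) ℝ)
      * star (hA.eigenvectorUnitary : Matrix (Fin n) (Fin n) ℝ) = 1 :=
    Matrix.mem_unitaryGroup_iff.mp hA.eigenvectorUnitary.2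
  have hspec : A = (hA.eigenvectorUnitary : Matrix (Fin n) (Fin n) ℝ)
      * Matrix.diagonal hA.eigenvalues
      * star (hA.eigenvectorUnitary : Matrix (Fin n) (Fin n) ℝ) := by
    have := hA.spectral_theorem
    rwa [show (RCLike.ofReal ∘ hA.eigenvalues : Fin n → ℝ) = hA.eigenvalues by
      rw [RCLike.ofReal_real_eq_id]; rfl] at this
  set U : Matrix (Fin n) (Fin n) ℝ := (hA.eigenvectorUnitary : Matrix (Fin n) (Fin n) ℝ)
  set Dg : Matrix (Fin n) (Fin n) ℝ := Matrix.diagonal hA.eigenvalues with hDg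
  have hone : (C : ℝ →+* ℝ[X]).mapMatrix U * (C : ℝ →+* ℝ[X]).mapMatrix (star U) = 1 := by
    rw [← _root_.map_mul, hU1, _root_.map_one]
  have hcomm : ∀ M : Matrix (Fin n) (Fin n) ℝ[X],
      Matrix.scalar (Fin n) (X : ℝ[X]) * M = M * Matrix.scalar (Fin n) (X : ℝ[X]) :=
    fun M => (Matrix.scalar_commute (X : ℝ[X]) (fun r => Commute.all _ r) M).eq
  have hchar : Matrix.charmatrix A
      = (C : ℝ →+* ℝ[X]).mapMatrix U * Matrix.charmatrix Dg
        * (C : ℝ →+* ℝ[X]).mapMatrix (star U) := by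
    rw [hspec]
    unfold Matrix.charmatrix
    rw [mul_sub, sub_mul, _root_.map_mul, _root_.map_mul]
    congr 1
    rw [show (C : ℝ →+* ℝ[X]).mapMatrix U * Matrix.scalar (Fin n) (X : ℝ[X])
        = Matrix.scalar (Fin n) (X : ℝ[X]) * (C : ℝ →+* ℝ[X]).mapMatrix U from
        (hcomm _).symm, mul_assoc, hone, mul_one]
  have hdet : A.charpoly = Dg.charpoly := by
    unfold Matrix.charpoly
    rw [hchar, Matrix.det_mul, Matrix.det_mul]
    have hd1 : ((C : ℝ →+* ℝ[X]).mapMatrix U).det * ((C : ℝ →+* ℝ[X]).mapMatrix (star U)).det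
        = 1 := by
      rw [← Matrix.det_mul, hone, Matrix.det_one]
    calc ((C : ℝ →+* ℝ[X]).mapMatrix U).det * (Matrix.charmatrix Dg).det
            * ((C : ℝ →+* ℝ[X]).mapMatrix (star U)).det
        = (Matrix.charmatrix Dg).det
            * (((C : ℝ →+* ℝ[X]).mapMatrix U).det
              * ((C : ℝ →+* ℝ[X]).mapMatrix (star U)).det) := by ring
      _ = (Matrix.charmatrix Dg).det := by rw [hd1, mul_one]
  rw [hdet]
  unfold Matrix.charpoly
  have : Matrix.charmatrix Dg = Matrix.diagonal fun i => X - C (hA.eigenvalues i) := by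
    ext i j
    by_cases h : i = j
    · subst h
      simp [hDg]
    · simp [h, hDg, Matrix.diagonal_apply_ne _ h]
  rw [this, Matrix.det_diagonal]

/-- Multiset of `μ`'s equals multiset of Hermitian eigenvalues. -/
lemma aux_multiset_eq {n : ℕ} {G : SimpleGraph (Fin n)} {μ : Fin n → ℝ} (hμ : IsDLSpec G μ) :
    (Finset.univ.val.map μ)
      = Finset.univ.val.map (distLap_isHermitian G).eigenvalues := by
  have h1 : (∏ i : Fin n, (X - C (μ i)))
      = ∏ i : Fin n, (X - C ((distLap_isHermitian G).eigenvalues i)) := by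
    rw [← hμ, aux_charpoly_hermitian (distLap_isHermitian G)]
  have h2 := congrArg Polynomial.roots h1
  rwa [Finset.prod_eq_multiset_prod, Finset.prod_eq_multiset_prod,
    show (Finset.univ.val.map fun i : Fin n => X - C (μ i))
      = ((Finset.univ.val.map μ).map fun r : ℝ => X - C r) by rw [Multiset.map_map]; rfl,
    show (Finset.univ.val.map fun i : Fin n => X - C ((distLap_isHermitian G).eigenvalues i))
      = ((Finset.univ.val.map (distLap_isHermitian G).eigenvalues).map
          fun r : ℝ => X - C r) by rw [Multiset.map_map]; rfl,
    Polynomial.roots_multiset_prod_X_sub_C, Polynomial.roots_multiset_prod_X_sub_C] at h2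

lemma aux_mu_exists_ev {n : ℕ} {G : SimpleGraph (Fin n)} {μ : Fin n → ℝ} (hμ : IsDLSpec G μ)
    (i : Fin n) : ∃ j : Fin n, μ i = (distLap_isHermitian G).eigenvalues j := by
  have h : μ i ∈ Finset.univ.val.map (distLap_isHermitian G).eigenvalues := by
    rw [← aux_multiset_eq hμ]
    exact Multiset.mem_map.mpr ⟨i, Finset.mem_univ i, rfl⟩
  obtain ⟨j, _, hj⟩ := Multiset.mem_map.mp h
  exact ⟨j, hj.symm⟩

lemma aux_ev_exists_mu {n : ℕ} {G : SimpleGraph (Fin n)} {μ : Fin n → ℝ} (hμ : IsDLSpec G μ)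
    (j : Fin n) : ∃ i : Fin n, (distLap_isHermitian G).eigenvalues j = μ i := by
  have h : (distLap_isHermitian G).eigenvalues j ∈ Finset.univ.val.map μ := by
    rw [aux_multiset_eq hμ]
    exact Multiset.mem_map.mpr ⟨j, Finset.mem_univ j, rfl⟩
  obtain ⟨i, _, hi⟩ := Multiset.mem_map.mp h
  exact ⟨i, hi.symm⟩

lemma aux_mu_nonneg {n : ℕ} {G : SimpleGraph (Fin n)} {μ : Fin n → ℝ} (hμ : IsDLSpec G μ)
    (i : Fin n) : 0 ≤ μ i := by
  obtain ⟨j, hj⟩ := aux_mu_exists_ev hμ i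
  rw [hj]
  exact (distLap_posSemidef G).eigenvalues_nonneg j

/-- Sum of the `μ` is twice the Wiener index. -/
lemma aux_sum_mu {n : ℕ} (hn : 2 ≤ n) {G : SimpleGraph (Fin n)} {μ : Fin n → ℝ}
    (hμ : IsDLSpec G μ) : ∑ i : Fin n, μ i = 2 * wiener G := by
  have hne : Nonempty (Fin n) := ⟨⟨0, by omega⟩⟩
  have htr := Matrix.trace_eq_neg_charpoly_coeff (distLap G)
  rw [hμ] at htr
  have hcoeff : (∏ i : Fin n, (X - C (μ i))).coeff (Fintype.card (Fin n) - 1)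
      = -∑ i : Fin n, μ i := by
    have := Polynomial.prod_X_sub_C_coeff_card_pred (Finset.univ : Finset (Fin n)) μ
      (by simp; omega)
    simpa using this
  rw [hcoeff, neg_neg] at htr
  have htrace : (distLap G).trace = ∑ v : Fin n, transm G v := by
    unfold Matrix.trace distLap
    simp [Matrix.diag, Matrix.sub_apply, SimpleGraph.dist_self]
  rw [← htr, htrace, wiener]
  ring

/-- Rayleigh quotient bound : quadratic form is at most `c` times norm², whenever all
eigenvalues are at most `c`. -/
lemma aux_rayleigh_matrix {n : ℕ} {A : Matrix (Fin n) (Fin n) ℝ} (hA : A.IsHermitian)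
    {c : ℝ} (hc : ∀ i, hA.eigenvalues i ≤ c) (x : Fin n → ℝ) :
    x ⬝ᵥ (A *ᵥ x) ≤ c * (x ⬝ᵥ x) := by
  classical
  have hU1 : (hA.eigenvectorUnitary : Matrix (Fin n) (Fin n) ℝ)
      * star (hA.eigenvectorUnitary : Matrix (Fin n) (Fin n) ℝ) = 1 :=
    Matrix.mem_unitaryGroup_iff.mp hA.eigenvectorUnitary.2
  have hspec : A = (hA.eigenvectorUnitary : Matrix (Fin n) (Fin n) ℝ)
      * Matrix.diagonal hA.eigenvalues
      * star (hA.eigenvectorUnitary : Matrix (Fin n) (Fin n) ℝ) := by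
    have := hA.spectral_theorem
    rwa [show (RCLike.ofReal ∘ hA.eigenvalues : Fin n → ℝ) = hA.eigenvalues by
      rw [RCLike.ofReal_real_eq_id]; rfl] at this
  set U : Matrix (Fin n) (Fin n) ℝ := (hA.eigenvectorUnitary : Matrix (Fin n) (Fin n) ℝ)
    with hU
  set y : Fin n → ℝ := star U *ᵥ x with hy
  have hyx : Matrix.vecMul x U = y := by
    funext i
    simp [hy, Matrix.vecMul, Matrix.mulVec, dotProduct, Matrix.conjTranspose_apply,
      mul_comm]
  have h0 : x ⬝ᵥ (A *ᵥ x)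
      = x ⬝ᵥ ((U * Matrix.diagonal hA.eigenvalues * star U) *ᵥ x) :=
    congrArg (fun M : Matrix (Fin n) (Fin n) ℝ => x ⬝ᵥ (M *ᵥ x)) hspec
  have hquad : x ⬝ᵥ (A *ᵥ x) = ∑ i : Fin n, hA.eigenvalues i * (y i) ^ 2 := by
    rw [h0, ← Matrix.mulVec_mulVec, ← Matrix.mulVec_mulVec, Matrix.dotProduct_mulVec, hyx,
      ← hy]
    simp only [dotProduct, Matrix.mulVec_diagonal]
    exact Finset.sum_congr rfl fun i _ => by ring
  have hnorm : x ⬝ᵥ x = ∑ i : Fin n, (y i) ^ 2 := by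
    calc x ⬝ᵥ x = x ⬝ᵥ ((U * star U) *ᵥ x) := by rw [hU1, Matrix.one_mulVec]
      _ = Matrix.vecMul x U ⬝ᵥ (star U *ᵥ x) := by
          rw [← Matrix.mulVec_mulVec, Matrix.dotProduct_mulVec]
      _ = ∑ i : Fin n, (y i) ^ 2 := by
          rw [hyx, ← hy]
          simp only [dotProduct]
          exact Finset.sum_congr rfl fun i _ => by ring
  rw [hquad, hnorm, Finset.mul_sum]
  exact Finset.sum_le_sum fun i _ => mul_le_mul_of_nonneg_right (hc i) (sq_nonneg _)

lemma aux_two_le_pos {n : ℕ} (hn : 2 ≤ n) : 0 < n := by omega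

lemma aux_two_le_sub {n : ℕ} (hn : 2 ≤ n) : n - 2 < n := by omega

lemma aux_rayleigh {n : ℕ} (hn : 2 ≤ n) {G : SimpleGraph (Fin n)} {μ : Fin n → ℝ}
    (hμ : IsDLSpec G μ) (hmono : Antitone μ) (x : Fin n → ℝ) :
    x ⬝ᵥ (distLap G *ᵥ x) ≤ μ ⟨0, aux_two_le_pos hn⟩ * (x ⬝ᵥ x) := by
  refine aux_rayleigh_matrix (distLap_isHermitian G) (fun i => ?_) x
  obtain ⟨j, hj⟩ := aux_ev_exists_mu hμ i
  rw [hj]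
  exact hmono (by simp [Fin.le_def])

/-- The largest eigenvalue dominates `n² Tr(v) / (n(n-1))` for every vertex `v`. -/
lemma aux_mu0 {n : ℕ} (hn : 2 ≤ n) {G : SimpleGraph (Fin n)} {μ : Fin n → ℝ}
    (hμ : IsDLSpec G μ) (hmono : Antitone μ) (v : Fin n) :
    (n : ℝ) ^ 2 * transm G v ≤ μ ⟨0, aux_two_le_pos hn⟩ * ((n : ℝ) * ((n : ℝ) - 1)) := by
  classical
  set x : Fin n → ℝ := fun u => if u = v then (n : ℝ) - 1 else -1 with hx
  have hxx : x ⬝ᵥ x = (n : ℝ) * ((n : ℝ) - 1) := by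
    rw [dotProduct, ← Finset.add_sum_erase _ _ (Finset.mem_univ v)]
    have h1 : x v * x v = ((n : ℝ) - 1) ^ 2 := by simp [hx]; ring
    have h2 : ∑ u ∈ Finset.univ.erase v, x u * x u
        = ∑ _u ∈ Finset.univ.erase v, (1 : ℝ) := by
      refine Finset.sum_congr rfl fun u hu => ?_
      have : u ≠ v := Finset.ne_of_mem_erase hu
      simp [hx, this]
    have h3 : ((Finset.univ.erase v).card : ℝ) = (n : ℝ) - 1 := by
      rw [Finset.card_erase_of_mem (Finset.mem_univ v), Finset.card_univ, Fintype.card_fin]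
      have : (1:ℕ) ≤ n := by omega
      push_cast [Nat.cast_sub this]
      ring
    rw [h1, h2, Finset.sum_const, nsmul_eq_mul, h3]
    ring
  have htransm_col : ∑ u ∈ Finset.univ.erase v, (G.dist u v : ℝ) = transm G v := by
    have hcomm : transm G v = ∑ u : Fin n, (G.dist u v : ℝ) :=
      Finset.sum_congr rfl fun u _ => by rw [SimpleGraph.dist_comm]
    rw [hcomm, ← Finset.add_sum_erase _ _ (Finset.mem_univ v)]
    simp [SimpleGraph.dist_self]
  have hquad : x ⬝ᵥ (distLap G *ᵥ x) = (n : ℝ) ^ 2 * transm G v := by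
    rw [distLap_quad]
    have houter : ∑ u : Fin n, ∑ w : Fin n, (G.dist u w : ℝ) * (x u - x w) ^ 2
        = 2 * ((n : ℝ) ^ 2 * transm G v) := by
      rw [← Finset.add_sum_erase _ _ (Finset.mem_univ v)]
      have hA : ∑ w : Fin n, (G.dist v w : ℝ) * (x v - x w) ^ 2
          = (n : ℝ) ^ 2 * transm G v := by
        have hval : ∀ w : Fin n, (G.dist v w : ℝ) * (x v - x w) ^ 2
            = (G.dist v w : ℝ) * (n : ℝ) ^ 2 := by
          intro w
          by_cases h : w = v
          · rw [h]; simp [SimpleGraph.dist_self]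
          · have hxv : x v = (n : ℝ) - 1 := by simp [hx]
            have hxw : x w = -1 := by simp [hx, h]
            have : x v - x w = (n : ℝ) := by rw [hxv, hxw]; ring
            rw [this]
        rw [Finset.sum_congr rfl fun w _ => hval w]
        rw [← Finset.sum_mul, transm]
        ring
      have hB : ∑ u ∈ Finset.univ.erase v, ∑ w : Fin n, (G.dist u w : ℝ) * (x u - x w) ^ 2
          = (n : ℝ) ^ 2 * transm G v := by
        have hinner : ∀ u : Fin n, u ≠ v →
            ∑ w : Fin n, (G.dist u w : ℝ) * (x u - x w) ^ 2
              = (G.dist u v : ℝ) * (n : ℝ) ^ 2 := by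
          intro u hu
          have hxu : x u = -1 := by simp [hx, hu]
          have hval : ∀ w : Fin n, (G.dist u w : ℝ) * (x u - x w) ^ 2
              = if w = v then (G.dist u v : ℝ) * (n : ℝ) ^ 2 else 0 := by
            intro w
            by_cases h : w = v
            · rw [h, if_pos rfl]
              have hxv : x v = (n : ℝ) - 1 := by simp [hx]
              have hd : x u - x v = -(n : ℝ) := by rw [hxu, hxv]; ring
              rw [hd]
              ring
            · have hxw : x w = -1 := by simp [hx, h]
              have hd : x u - x w = 0 := by rw [hxu, hxw]; ring
              rw [hd, if_neg h]
              ring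
          rw [Finset.sum_congr rfl fun w _ => hval w, Finset.sum_ite_eq' Finset.univ v
            (fun _ => (G.dist u v : ℝ) * (n : ℝ) ^ 2)]
          simp
        rw [Finset.sum_congr rfl fun u hu => hinner u (Finset.ne_of_mem_erase hu),
          ← Finset.sum_mul, htransm_col]
        ring
      rw [hA, hB]
      ring
    rw [houter]
    ring
  have := aux_rayleigh hn hμ hmono x
  rw [hquad, hxx] at this
  exact this

lemma aux_diam_pos {n : ℕ} (hn : 2 ≤ n) {G : SimpleGraph (Fin n)} (hG : G.Connected) :
    1 ≤ G.diam := by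
  haveI hnonempty : Nonempty (Fin n) := ⟨⟨0, by omega⟩⟩
  have hne2 : (⟨0, by omega⟩ : Fin n) ≠ ⟨1, by omega⟩ := by
    simp [Fin.ext_iff]
  have hediam : G.ediam ≠ ⊤ := by
    obtain ⟨a, b, hab⟩ := G.exists_edist_eq_ediam_of_finite
    rw [← hab]
    exact SimpleGraph.edist_ne_top_iff_reachable.mpr (hG.preconnected a b)
  have h1 := SimpleGraph.dist_le_diam hediam (u := (⟨0, by omega⟩ : Fin n))
    (v := (⟨1, by omega⟩ : Fin n))
  have h2 := hG.pos_dist_of_ne hne2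
  omega

lemma aux_big {n : ℕ} (hn : 2 ≤ n) {G : SimpleGraph (Fin n)} (hG : G.Connected)
    {μ : Fin n → ℝ} (hμ : IsDLSpec G μ) (hmono : Antitone μ) :
    (2 * (n : ℝ) + (G.diam : ℝ) ^ 2 - 2 * (G.diam : ℝ) + 1) / 2 ≤ μ ⟨0, aux_two_le_pos hn⟩ := by
  haveI hnonempty : Nonempty (Fin n) := ⟨⟨0, by omega⟩⟩
  obtain ⟨v, w, hvw⟩ := G.exists_dist_eq_diam
  have hd1 : 1 ≤ G.diam := aux_diam_pos hn hG
  obtain ⟨hle, hsum⟩ := aux_transm_nat hG hvw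
  have hN : (2 : ℝ) ≤ (n : ℝ) := by exact_mod_cast hn
  have hD1 : (1 : ℝ) ≤ (G.diam : ℝ) := by exact_mod_cast hd1
  have hT : transm G v = ((∑ u : Fin n, G.dist v u : ℕ) : ℝ) := by
    rw [transm]; push_cast; rfl
  have hTlow : 2 * (n : ℝ) - 2 + ((G.diam : ℝ) ^ 2 - (G.diam : ℝ)) ≤ 2 * transm G v := by
    have hc : ((G.diam * (G.diam + 1) + 2 * (n - G.diam - 1) : ℕ) : ℝ)
        = 2 * (n : ℝ) - 2 + ((G.diam : ℝ) ^ 2 - (G.diam : ℝ)) := by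
      have h2 : n - G.diam - 1 = n - (G.diam + 1) := by omega
      rw [h2]
      push_cast [Nat.cast_sub hle]
      ring
    have h3 : ((G.diam * (G.diam + 1) + 2 * (n - G.diam - 1) : ℕ) : ℝ)
        ≤ ((2 * ∑ u : Fin n, G.dist v u : ℕ) : ℝ) := Nat.cast_le.mpr hsum
    rw [hc] at h3
    rw [hT]
    push_cast at h3 ⊢
    linarith
  have hTn : (n : ℝ) - 1 ≤ transm G v := by nlinarith [hTlow, hD1]
  have h1 := aux_mu0 hn hμ hmono v
  have hNpos : (0 : ℝ) < (n : ℝ) := by linarith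
  have hN1 : (0 : ℝ) < (n : ℝ) - 1 := by linarith
  have key : (transm G v + 1) * ((n : ℝ) * ((n : ℝ) - 1))
      ≤ μ ⟨0, by omega⟩ * ((n : ℝ) * ((n : ℝ) - 1)) := by
    nlinarith [mul_nonneg hNpos.le (sub_nonneg.mpr hTn)]
  have hTe : transm G v + 1 ≤ μ ⟨0, by omega⟩ :=
    le_of_mul_le_mul_right key (by positivity)
  linarith

lemma aux_small {n : ℕ} (hn : 2 ≤ n) {G : SimpleGraph (Fin n)}
    {μ : Fin n → ℝ} (hμ : IsDLSpec G μ) (hmono : Antitone μ) :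
    μ ⟨n - 2, aux_two_le_sub hn⟩ ≤ 2 * wiener G / ((n : ℝ) - 1) := by
  classical
  have hN : (2 : ℝ) ≤ (n : ℝ) := by exact_mod_cast hn
  have hlastpos : 0 ≤ μ ⟨n - 1, by omega⟩ := aux_mu_nonneg hμ _
  have hsum_mu := aux_sum_mu hn hμ
  have hsplit : ∑ i : Fin n, μ i
      = μ ⟨n - 1, by omega⟩ + ∑ i ∈ Finset.univ.erase (⟨n - 1, by omega⟩ : Fin n), μ i :=
    (Finset.add_sum_erase _ _ (Finset.mem_univ _)).symm
  have hbound : ((n : ℝ) - 1) * μ ⟨n - 2, by omega⟩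
      ≤ ∑ i ∈ Finset.univ.erase (⟨n - 1, by omega⟩ : Fin n), μ i := by
    have hcard : (Finset.univ.erase (⟨n - 1, by omega⟩ : Fin n)).card = n - 1 := by
      rw [Finset.card_erase_of_mem (Finset.mem_univ _), Finset.card_univ, Fintype.card_fin]
    have hcast : (((n - 1 : ℕ) : ℝ)) = (n : ℝ) - 1 := by
      have : (1:ℕ) ≤ n := by omega
      push_cast [Nat.cast_sub this]
      ring
    calc ((n : ℝ) - 1) * μ ⟨n - 2, by omega⟩
        = ((n - 1 : ℕ) : ℝ) * μ ⟨n - 2, by omega⟩ := by rw [hcast]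
      _ = ∑ _i ∈ Finset.univ.erase (⟨n - 1, by omega⟩ : Fin n), μ ⟨n - 2, by omega⟩ := by
          rw [Finset.sum_const, hcard, nsmul_eq_mul]
      _ ≤ ∑ i ∈ Finset.univ.erase (⟨n - 1, by omega⟩ : Fin n), μ i := by
          refine Finset.sum_le_sum fun i hi => ?_
          refine hmono ?_
          have hine : i ≠ ⟨n - 1, by omega⟩ := Finset.ne_of_mem_erase hi
          have : i.val ≠ n - 1 := fun h => hine (Fin.ext h)
          have := i.isLt
          rw [Fin.le_def]
          simp only
          omega
  have hN1 : (0 : ℝ) < (n : ℝ) - 1 := by linarith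
  rw [le_div_iff₀ hN1]
  linarith [hsum_mu, hsplit, hbound, hlastpos]

theorem dls_lower_diam_wiener (n : ℕ) (hn : 2 ≤ n) (G : SimpleGraph (Fin n))
    (hG : G.Connected) (μ : Fin n → ℝ) (hμ : IsDLSpec G μ) (hmono : Antitone μ) :
    (2 * (n : ℝ) + (G.diam : ℝ) ^ 2 - 2 * (G.diam : ℝ) + 1) / 2 -
        2 * wiener G / ((n : ℝ) - 1)
      ≤ μ ⟨0, by omega⟩ - μ ⟨n - 2, by omega⟩ :=
  sub_le_sub (aux_big hn hG hμ hmono) (aux_small hn hμ hmono)
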